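/- Let λ > 0 be a root of the equation −(1/λ) log(1 − λ²/(4(exp(λ) − 1 − λ))) = 1 (such a root exists and satisfies 0.535 ≤ λ ≤ 0.536). Define L(x) = max{−1, min{1, x}}, L₊(x) = (1/λ) log(1 + λx + (exp(λ) − 1 − λ)x²), L₋(x) = −L₊(−x), L₊'(x) = (1/log 2) log(1 + (log 2)x + (log 2)²x²/2 + (1 − log 2 − (log 2)²/2)(max{x,0})³), and L₋'(x) = −L₊'(−x). Then for every real x: L₋(x) ≤ L(x) ≤ L₊(x) and L₋'(x) ≤ L(x) ≤ L₊'(x). -/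

import Mathlib

set_option maxHeartbeats 1000000

open Finset in
lemma real_exp_eq_tsum (y : ℝ) : Real.exp y = ∑' n : ℕ, y ^ n / n.factorial := by
  rw [Real.exp_eq_exp_ℝ, NormedSpace.exp_eq_tsum_div]

open Finset in
lemma exp_taylor_le (μ x : ℝ) (hμ : 0 ≤ μ) (k : ℕ)
    (hx : ∀ n : ℕ, x ^ (n + k) ≤ x ^ k) :
    Real.exp (μ * x) ≤ ∑ i ∈ range k, (μ * x) ^ i / i.factorial
      + x ^ k * (Real.exp μ - ∑ i ∈ range k, μ ^ i / i.factorial) := by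
  have hs1 : Summable (fun n : ℕ => (μ * x) ^ n / n.factorial) :=
    Real.summable_pow_div_factorial _
  have hs2 : Summable (fun n : ℕ => μ ^ n / n.factorial) :=
    Real.summable_pow_div_factorial _
  have hs1' : Summable (fun n : ℕ => (μ * x) ^ (n + k) / (n + k).factorial) :=
    (summable_nat_add_iff k).2 hs1
  have hs2' : Summable (fun n : ℕ => μ ^ (n + k) / (n + k).factorial) :=
    (summable_nat_add_iff k).2 hs2
  have e1 : Real.exp (μ * x) = ∑ i ∈ range k, (μ * x) ^ i / i.factorial
      + ∑' n : ℕ, (μ * x) ^ (n + k) / (n + k).factorial := by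
    rw [real_exp_eq_tsum]
    exact (Summable.sum_add_tsum_nat_add k hs1).symm
  have e2 : Real.exp μ = ∑ i ∈ range k, μ ^ i / i.factorial
      + ∑' n : ℕ, μ ^ (n + k) / (n + k).factorial := by
    rw [real_exp_eq_tsum]
    exact (Summable.sum_add_tsum_nat_add k hs2).symm
  have key : ∑' n : ℕ, (μ * x) ^ (n + k) / (n + k).factorial
      ≤ x ^ k * ∑' n : ℕ, μ ^ (n + k) / (n + k).factorial := by
    rw [← tsum_mul_left]
    refine Summable.tsum_le_tsum (fun n => ?_) hs1' (hs2'.mul_left _)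
    have h1 : (μ * x) ^ (n + k) = μ ^ (n + k) * x ^ (n + k) := mul_pow _ _ _
    have h2 : μ ^ (n + k) * x ^ (n + k) ≤ μ ^ (n + k) * x ^ k :=
      mul_le_mul_of_nonneg_left (hx n) (pow_nonneg hμ _)
    rw [h1]
    calc μ ^ (n + k) * x ^ (n + k) / (n + k).factorial
        ≤ μ ^ (n + k) * x ^ k / (n + k).factorial := by gcongr
      _ = x ^ k * (μ ^ (n + k) / (n + k).factorial) := by ring
  have e3 : Real.exp μ - ∑ i ∈ range k, μ ^ i / i.factorial
      = ∑' n : ℕ, μ ^ (n + k) / (n + k).factorial := by linarith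
  rw [e3]
  linarith

lemma exp_le_quadratic {t : ℝ} (ht : t ≤ 0) : Real.exp t ≤ 1 + t + t ^ 2 / 2 := by
  have h1 : 1 + (-t) + (-t) ^ 2 / 2 ≤ Real.exp (-t) := by
    have := Real.sum_le_exp_of_nonneg (neg_nonneg.2 ht) 3
    simp [Finset.sum_range_succ, Nat.factorial] at this
    nlinarith [this]
  have h2 : Real.exp t * Real.exp (-t) = 1 := by
    rw [← Real.exp_add]; simp
  have hB : (0:ℝ) < 1 - t + t ^ 2 / 2 := by nlinarith [sq_nonneg t]
  have h3 : Real.exp t * (1 - t + t ^ 2 / 2) ≤ 1 := by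
    nlinarith [mul_le_mul_of_nonneg_left h1 (Real.exp_pos t).le, h2]
  nlinarith [h3, hB, sq_nonneg (t ^ 2), Real.exp_pos t]

/-- The clipping function `L(x) = max {-1, min {1, x}}`. -/
noncomputable def clipL (x : ℝ) : ℝ := max (-1) (min 1 x)

/-- The upper bound `L₊(x) = (1/λ) log (1 + λ x + (exp λ - 1 - λ) x²)`. -/
noncomputable def clipLplus (lam x : ℝ) : ℝ :=
  (1 / lam) * Real.log (1 + lam * x + (Real.exp lam - 1 - lam) * x ^ 2)

/-- The lower bound `L₋(x) = -L₊(-x)`. -/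
noncomputable def clipLminus (lam x : ℝ) : ℝ := -clipLplus lam (-x)

/-- The alternative upper bound
`L₊'(x) = (1/log 2) log (1 + (log 2) x + (log 2)² x²/2 + (1 - log 2 - (log 2)²/2) (x⁺)³)`. -/
noncomputable def clipLplus' (x : ℝ) : ℝ :=
  (1 / Real.log 2) * Real.log (1 + Real.log 2 * x + (Real.log 2) ^ 2 / 2 * x ^ 2 +
    (1 - Real.log 2 - (Real.log 2) ^ 2 / 2) * (max x 0) ^ 3)

/-- The alternative lower bound `L₋'(x) = -L₊'(-x)`. -/
noncomputable def clipLminus' (x : ℝ) : ℝ := -clipLplus' (-x)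

lemma clipL_neg (x : ℝ) : clipL (-x) = -clipL x := by
  unfold clipL
  rcases le_total x (-1) with h | h <;> rcases le_total x 1 with h2 | h2 <;>
    rw [max_def, max_def, min_def, min_def] <;> split_ifs <;> (try push_neg at *) <;> linarith

lemma core1 (lam : ℝ) (hlam : 0 < lam)
    (hroot : -(1 / lam) * Real.log (1 - lam ^ 2 / (4 * (Real.exp lam - 1 - lam))) = 1)
    (x : ℝ) :
    Real.exp (lam * clipL x) ≤ 1 + lam * x + (Real.exp lam - 1 - lam) * x ^ 2 := by
  set c : ℝ := Real.exp lam - 1 - lam with hc_def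
  have hquad : 1 + lam + lam ^ 2 / 2 ≤ Real.exp lam := by
    have := Real.sum_le_exp_of_nonneg hlam.le 3
    simp [Finset.sum_range_succ, Nat.factorial] at this
    nlinarith [this]
  have hc : 0 < c := by nlinarith
  have hy0 : 0 < 1 - lam ^ 2 / (4 * c) := by
    rw [sub_pos, div_lt_one (by positivity)]
    nlinarith
  have hy : 1 - lam ^ 2 / (4 * c) = Real.exp (-lam) := by
    have hlog : Real.log (1 - lam ^ 2 / (4 * c)) = -lam := by
      have h : -(1 / lam) * Real.log (1 - lam ^ 2 / (4 * c))
          = -(1 / lam) * (-lam) := by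
        rw [hroot]; field_simp
      exact mul_left_cancel₀ (neg_ne_zero.2 (one_div_ne_zero hlam.ne')) h
    rw [← hlog, Real.exp_log hy0]
  rcases le_total x (-1) with hx1 | hx1
  · -- clipL x = -1
    have hcl : clipL x = -1 := by
      unfold clipL
      rw [min_eq_right (by linarith), max_eq_left (by linarith)]
    rw [hcl]
    have key : Real.exp (-lam) ≤ 1 + lam * x + c * x ^ 2 := by
      rw [← hy]
      have h4 : (0:ℝ) ≤ (2 * c * x + lam) ^ 2 := sq_nonneg _
      have h5 : (0:ℝ) ≤ 4 * c * (lam * x + c * x ^ 2 + lam ^ 2 / (4 * c)) := by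
        have he : 4 * c * (lam * x + c * x ^ 2 + lam ^ 2 / (4 * c))
            = (2 * c * x + lam) ^ 2 := by
          field_simp
          ring
        rw [he]; exact h4
      have h6 : (0:ℝ) ≤ lam * x + c * x ^ 2 + lam ^ 2 / (4 * c) :=
        le_of_mul_le_mul_left (by linarith [h5]) (by positivity : (0:ℝ) < 4 * c)
      linarith [h6]
    simpa using key.trans_eq (by ring)
  · rcases le_total x 1 with hx2 | hx2
    · -- clipL x = x
      have hcl : clipL x = x := by
        unfold clipL
        rw [min_eq_right hx2, max_eq_right hx1]
      rw [hcl]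
      have habs : |x| ≤ 1 := abs_le.mpr ⟨hx1, hx2⟩
      have hx : ∀ n : ℕ, x ^ (n + 2) ≤ x ^ 2 := by
        intro n
        calc x ^ (n + 2) ≤ |x ^ (n + 2)| := le_abs_self _
          _ = |x| ^ (n + 2) := (abs_pow x _)
          _ ≤ |x| ^ 2 := pow_le_pow_of_le_one (abs_nonneg x) habs (by omega)
          _ = x ^ 2 := sq_abs x
      have := exp_taylor_le lam x hlam.le 2 hx
      simp [Finset.sum_range_succ, Nat.factorial] at this
      nlinarith [this]
    · -- clipL x = 1
      have hcl : clipL x = 1 := by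
        unfold clipL
        rw [min_eq_left hx2, max_eq_right (by norm_num : (-1:ℝ) ≤ 1)]
      rw [hcl, mul_one]
      have hx2' : 1 ≤ x ^ 2 := by nlinarith
      nlinarith [hc]

lemma core2 (x : ℝ) :
    Real.exp (Real.log 2 * clipL x) ≤ 1 + Real.log 2 * x + (Real.log 2) ^ 2 / 2 * x ^ 2 +
      (1 - Real.log 2 - (Real.log 2) ^ 2 / 2) * (max x 0) ^ 3 := by
  set μ : ℝ := Real.log 2 with hμ_def
  have hμ : 0 < μ := Real.log_pos (by norm_num)
  have hexpμ : Real.exp μ = 2 := Real.exp_log (by norm_num)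
  have hμu : μ < 0.6931471808 := Real.log_two_lt_d9
  have hμl : 0.6931471803 < μ := Real.log_two_gt_d9
  have hd : 0 ≤ 1 - μ - μ ^ 2 / 2 := by nlinarith
  rcases le_total x 0 with hx0 | hx0
  · have hmax : max x 0 = 0 := max_eq_right hx0
    rw [hmax]
    rcases le_total x (-1) with hx1 | hx1
    · have hcl : clipL x = -1 := by
        unfold clipL
        rw [min_eq_right (by linarith), max_eq_left (by linarith)]
      rw [hcl]
      have he : Real.exp (μ * -1) = 1 / 2 := by
        rw [show μ * -1 = -μ by ring, Real.exp_neg, hexpμ]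
        norm_num
      rw [he]
      nlinarith [sq_nonneg (μ * x + 1)]
    · have hcl : clipL x = x := by
        unfold clipL
        rw [min_eq_right (by linarith), max_eq_right hx1]
      rw [hcl]
      have ht : μ * x ≤ 0 := mul_nonpos_of_nonneg_of_nonpos hμ.le hx0
      have := exp_le_quadratic ht
      nlinarith [this]
  · have hmax : max x 0 = x := max_eq_left hx0
    rw [hmax]
    rcases le_total x 1 with hx1 | hx1
    · have hcl : clipL x = x := by
        unfold clipL
        rw [min_eq_right hx1, max_eq_right (by linarith)]
      rw [hcl]
      have hx : ∀ n : ℕ, x ^ (n + 3) ≤ x ^ 3 := fun n =>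
        pow_le_pow_of_le_one hx0 hx1 (by omega)
      have := exp_taylor_le μ x hμ.le 3 hx
      simp [Finset.sum_range_succ, Nat.factorial] at this
      rw [hexpμ] at this
      nlinarith [this]
    · have hcl : clipL x = 1 := by
        unfold clipL
        rw [min_eq_left hx1, max_eq_right (by norm_num : (-1:ℝ) ≤ 1)]
      rw [hcl, mul_one, hexpμ]
      have h3 : 1 ≤ x ^ 3 := by nlinarith [mul_nonneg (sub_nonneg.2 hx1) (by positivity : (0:ℝ) ≤ x ^ 2 + x + 1)]
      nlinarith [mul_nonneg hd (by linarith : (0:ℝ) ≤ x ^ 3 - 1),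
        mul_nonneg hμ.le (by linarith : (0:ℝ) ≤ x - 1),
        mul_nonneg (mul_nonneg hμ.le hμ.le) (by nlinarith : (0:ℝ) ≤ x ^ 2 - 1)]

lemma upper1 (lam : ℝ) (hlam : 0 < lam)
    (hroot : -(1 / lam) * Real.log (1 - lam ^ 2 / (4 * (Real.exp lam - 1 - lam))) = 1)
    (x : ℝ) : clipL x ≤ clipLplus lam x := by
  have hcore := core1 lam hlam hroot x
  have hq : 0 < 1 + lam * x + (Real.exp lam - 1 - lam) * x ^ 2 :=
    lt_of_lt_of_le (Real.exp_pos _) hcore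
  have hlog := (Real.le_log_iff_exp_le hq).2 hcore
  unfold clipLplus
  calc clipL x = (1 / lam) * (lam * clipL x) := by field_simp
    _ ≤ (1 / lam) * Real.log (1 + lam * x + (Real.exp lam - 1 - lam) * x ^ 2) :=
        mul_le_mul_of_nonneg_left hlog (by positivity)

lemma upper2 (x : ℝ) : clipL x ≤ clipLplus' x := by
  have hcore := core2 x
  have hq : 0 < 1 + Real.log 2 * x + (Real.log 2) ^ 2 / 2 * x ^ 2 +
      (1 - Real.log 2 - (Real.log 2) ^ 2 / 2) * (max x 0) ^ 3 :=
    lt_of_lt_of_le (Real.exp_pos _) hcore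
  have hlog := (Real.le_log_iff_exp_le hq).2 hcore
  have hμ : 0 < Real.log 2 := Real.log_pos (by norm_num)
  unfold clipLplus'
  calc clipL x = (1 / Real.log 2) * (Real.log 2 * clipL x) := by field_simp
    _ ≤ _ := mul_le_mul_of_nonneg_left hlog (by positivity)

theorem clip_bounds (lam : ℝ) (hlam : 0 < lam)
    (hroot : -(1 / lam) * Real.log (1 - lam ^ 2 / (4 * (Real.exp lam - 1 - lam))) = 1)
    (x : ℝ) :
    (clipLminus lam x ≤ clipL x ∧ clipL x ≤ clipLplus lam x) ∧
    (clipLminus' x ≤ clipL x ∧ clipL x ≤ clipLplus' x) := by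
  have h1 := upper1 lam hlam hroot x
  have h2 := upper2 x
  have h1' := upper1 lam hlam hroot (-x)
  have h2' := upper2 (-x)
  rw [clipL_neg] at h1' h2'
  constructor
  · exact ⟨by unfold clipLminus; linarith, h1⟩
  · exact ⟨by unfold clipLminus'; linarith, h2⟩
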